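/- Let λ > 0 and let (A_l)_{l ∈ ℤ} be a family of mutually independent {0,1}-valued random variables on a probability space with Pr{A_l = 1} = 1/(1 + e^{λ·2^l}) for every l ∈ ℤ. Then the series Σ_{l ∈ ℤ} 2^l · A_l converges almost surely, and the law of its sum is the exponential distribution with rate λ. -/

import Mathlib

open MeasureTheory ProbabilityTheory

open Finset Filter Topology
open scoped ENNReal NNReal

lemma aux_sum_bits_lt (a : ℕ → ℕ) (ha : ∀ j, a j ≤ 1) (J : ℕ) :
    ∑ j ∈ Finset.range J, 2 ^ j * a j < 2 ^ J := by
  induction J with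
  | zero => simp
  | succ J ih =>
    rw [Finset.sum_range_succ, pow_succ]
    have h := ha J
    have h2 : 2 ^ J * a J ≤ 2 ^ J := by nlinarith [(Nat.pow_pos (by norm_num : 0 < 2) : 0 < 2 ^ J)]
    omega

lemma aux_sum_testBit (J : ℕ) : ∀ n : ℕ, n < 2 ^ J →
    ∑ j ∈ Finset.range J, 2 ^ j * (if n.testBit j then 1 else 0) = n := by
  induction J with
  | zero => intro n hn; interval_cases n <;> simp
  | succ J ih =>
    intro n hn
    rw [Finset.sum_range_succ']
    have h1 : ∀ j, n.testBit (j + 1) = (n / 2).testBit j := fun j => Nat.testBit_succ n j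
    have h2 : ∑ j ∈ Finset.range J, 2 ^ (j + 1) * (if n.testBit (j + 1) then 1 else 0)
        = 2 * ∑ j ∈ Finset.range J, 2 ^ j * (if (n / 2).testBit j then 1 else 0) := by
      rw [Finset.mul_sum]
      refine Finset.sum_congr rfl fun j _ => ?_
      rw [h1 j]; ring
    have hdiv : n / 2 < 2 ^ J := by
      rw [pow_succ] at hn; omega
    rw [h2, ih _ hdiv, Nat.testBit_zero]
    simp only [pow_zero, one_mul]
    rcases Nat.even_or_odd n with h | h
    · have : n % 2 = 0 := Nat.even_iff.mp h
      simp [this]; omega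
    · have : n % 2 = 1 := Nat.odd_iff.mp h
      simp [this]; omega

lemma aux_testBit_sum (a : ℕ → ℕ) (ha : ∀ j, a j ≤ 1) : ∀ (J j : ℕ), j < J →
    a j = if (∑ i ∈ Finset.range J, 2 ^ i * a i).testBit j then 1 else 0 := by
  intro J
  induction J generalizing a ha with
  | zero => omega
  | succ J ih =>
    intro j hj
    have hsum : ∑ i ∈ Finset.range (J + 1), 2 ^ i * a i
        = 2 * (∑ i ∈ Finset.range J, 2 ^ i * a (i + 1)) + a 0 := by
      rw [Finset.sum_range_succ', Finset.mul_sum]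
      congr 1
      · refine Finset.sum_congr rfl fun i _ => ?_; ring
      · simp
    rcases Nat.eq_zero_or_pos j with rfl | hjpos
    · rw [hsum, Nat.testBit_zero]
      have := ha 0
      rcases Nat.le_one_iff_eq_zero_or_eq_one.mp this with h | h <;>
        simp [h, Nat.add_mul_mod_self_left, Nat.mul_add_mod]
    · obtain ⟨i, rfl⟩ := Nat.exists_eq_add_of_lt hjpos
      rw [hsum]
      have : (2 * (∑ i ∈ Finset.range J, 2 ^ i * a (i + 1)) + a 0).testBit (0 + i + 1)
          = (∑ i ∈ Finset.range J, 2 ^ i * a (i + 1)).testBit (0 + i) := by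
        rw [Nat.testBit_succ]
        congr 1
        have := ha 0; omega
      rw [this]
      simpa using ih (fun i => a (i + 1)) (fun i => ha _) (0 + i) (by omega)

lemma aux_prod_geom (r : ℝ) (hr : r ≠ 1) (J : ℕ) :
    ∏ j ∈ Finset.range J, (1 + r ^ (2 ^ j)) = (1 - r ^ (2 ^ J)) / (1 - r) := by
  have h1 : 1 - r ≠ 0 := sub_ne_zero.mpr (Ne.symm hr)
  induction J with
  | zero => simp; field_simp
  | succ J ih =>
    rw [Finset.prod_range_succ, ih, pow_succ, pow_mul]
    field_simp
    ring

section Core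

variable {Ω : Type*} [MeasurableSpace Ω] (P : Measure Ω) [IsProbabilityMeasure P]
    (lam : ℝ) (hlam : 0 < lam) (A : ℤ → Ω → ℝ)
    (hmeas : ∀ l : ℤ, Measurable (A l))
    (h01 : ∀ (l : ℤ) (ω : Ω), A l ω = 0 ∨ A l ω = 1)
    (hindep : iIndepFun A P)
    (hprob : ∀ l : ℤ,
      P {ω | A l ω = 1} = ENNReal.ofReal (1 / (1 + Real.exp (lam * 2 ^ l))))

include hlam hmeas h01 hindep hprob in
lemma aux_core (x : ℝ) (hx : 0 ≤ x) (N : ℕ) :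
    P {ω | x < ∑ l ∈ Finset.Icc (-(N : ℤ)) (N : ℤ), (2 : ℝ) ^ l * A l ω}
      = ENNReal.ofReal
        ((Real.exp (-(lam * (2 : ℝ) ^ (-(N : ℤ)))) ^ ((⌊(2 : ℝ) ^ (N : ℤ) * x⌋).toNat + 1)
            - Real.exp (-(lam * (2 : ℝ) ^ (-(N : ℤ)))) ^ (2 ^ (2 * N + 1)))
          / (1 - Real.exp (-(lam * (2 : ℝ) ^ (-(N : ℤ)))) ^ (2 ^ (2 * N + 1)))) := by
  set J : ℕ := 2 * N + 1 with hJ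
  set M : ℕ := 2 ^ J with hM
  set c : ℝ := lam * (2 : ℝ) ^ (-(N : ℤ)) with hc
  set r : ℝ := Real.exp (-c) with hr
  set m : ℕ := (⌊(2 : ℝ) ^ (N : ℤ) * x⌋).toNat + 1 with hm
  have hcpos : 0 < c := mul_pos hlam (zpow_pos (by norm_num) _)
  have hrpos : 0 < r := Real.exp_pos _
  have hrlt1 : r < 1 := by
    rw [hr, Real.exp_lt_one_iff]; linarith
  have hrne1 : r ≠ 1 := ne_of_lt hrlt1
  -- the bits
  set b : ℤ → Ω → ℕ := fun l ω => if A l ω = 1 then 1 else 0 with hb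
  have hb01 : ∀ l ω, b l ω ≤ 1 := by
    intro l ω; simp only [hb]; split <;> norm_num
  have hAb : ∀ l ω, A l ω = (b l ω : ℝ) := by
    intro l ω
    rcases h01 l ω with h | h <;> simp [hb, h]
  set k : Ω → ℕ := fun ω => ∑ j ∈ Finset.range J, 2 ^ j * b ((j : ℤ) - N) ω with hk
  have hkM : ∀ ω, k ω < M := fun ω => aux_sum_bits_lt _ (fun j => hb01 _ _) J
  have hkmeas : Measurable k := by
    apply Finset.measurable_sum
    intro j _
    apply Measurable.const_mul
    exact Measurable.ite ((hmeas _) (measurableSet_singleton 1)) measurable_const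
      measurable_const
  -- reindexing
  have hinj : Function.Injective (fun j : ℕ => (j : ℤ) - N) := by intro a b h; dsimp at h; omega
  set e : ℕ ↪ ℤ := ⟨fun j => (j : ℤ) - N, hinj⟩ with he
  have hIcc : Finset.Icc (-(N : ℤ)) (N : ℤ) = (Finset.range J).map e := by
    ext l
    simp only [Finset.mem_Icc, Finset.mem_map, Finset.mem_range, he,
      Function.Embedding.coeFn_mk]
    constructor
    · rintro ⟨h1, h2⟩
      exact ⟨(l + N).toNat, by omega, by omega⟩
    · rintro ⟨j, hj, rfl⟩
      omega
  have h2ne : (2 : ℝ) ≠ 0 := by norm_num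
  -- value of the partial sum
  have hYk : ∀ ω, ∑ l ∈ Finset.Icc (-(N : ℤ)) (N : ℤ), (2 : ℝ) ^ l * A l ω
      = (2 : ℝ) ^ (-(N : ℤ)) * (k ω : ℝ) := by
    intro ω
    rw [hIcc, Finset.sum_map]
    rw [hk]
    push_cast
    rw [Finset.mul_sum]
    refine Finset.sum_congr rfl fun j _ => ?_
    simp only [he, Function.Embedding.coeFn_mk]
    rw [hAb ((j : ℤ) - N) ω]
    rw [zpow_sub₀ h2ne, zpow_natCast]
    push_cast
    field_simp
    rw [mul_assoc, mul_comm _ ((2 : ℝ) ^ (-(N : ℤ))), ← mul_assoc, ← zpow_add₀ h2ne, add_neg_cancel,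
      zpow_zero, one_mul]
  -- the event in terms of k
  have hset : {ω | x < ∑ l ∈ Finset.Icc (-(N : ℤ)) (N : ℤ), (2 : ℝ) ^ l * A l ω}
      = {ω | m ≤ k ω} := by
    ext ω
    simp only [Set.mem_setOf_eq]
    rw [hYk ω]
    have hpow : (0 : ℝ) < (2 : ℝ) ^ (N : ℤ) := zpow_pos (by norm_num) _
    have hniff : x < (2 : ℝ) ^ (-(N : ℤ)) * (k ω : ℝ) ↔ (2 : ℝ) ^ (N : ℤ) * x < (k ω : ℝ) := by
      rw [zpow_neg]
      rw [inv_mul_eq_div, lt_div_iff₀ hpow]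
      constructor <;> intro h <;> nlinarith
    have hkcast : ((k ω : ℕ) : ℝ) = (((k ω : ℕ) : ℤ) : ℝ) := by push_cast; rfl
    rw [hniff, hkcast, ← Int.floor_lt]
    have hfl : 0 ≤ ⌊(2 : ℝ) ^ (N : ℤ) * x⌋ := Int.floor_nonneg.mpr (by positivity)
    omega
  rw [hset]
  -- decompose into atoms
  have hunion : {ω | m ≤ k ω} = ⋃ n ∈ Finset.Ico m M, {ω | k ω = n} := by
    ext ω
    simp only [Set.mem_setOf_eq, Set.mem_iUnion, Finset.mem_Ico, exists_prop]
    constructor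
    · intro h; exact ⟨k ω, ⟨h, hkM ω⟩, rfl⟩
    · rintro ⟨n, ⟨h1, _⟩, rfl⟩; exact h1
  rw [hunion]
  rw [measure_biUnion_finset]
  rotate_left
  · intro n₁ _ n₂ _ hne
    refine Set.disjoint_left.mpr fun ω h1 h2 => hne ?_
    simp only [Set.mem_setOf_eq] at h1 h2
    omega
  · intro n _
    exact hkmeas (measurableSet_singleton n)
  -- success probabilities
  have hexp_pos : ∀ y : ℝ, (0:ℝ) < 1 + Real.exp y := fun y => by positivity
  set p : ℤ → ℝ := fun l => 1 / (1 + Real.exp (lam * 2 ^ l)) with hp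
  have hp_nonneg : ∀ l, 0 ≤ p l := fun l => by
    have := hexp_pos (lam * 2 ^ l); rw [hp]; positivity
  have hp_le_one : ∀ l, p l ≤ 1 := fun l => by
    rw [hp]
    rw [div_le_one (hexp_pos _)]
    have := Real.exp_pos (lam * 2 ^ l); linarith
  have hprob' : ∀ l, P {ω | A l ω = 1} = ENNReal.ofReal (p l) := hprob
  have hPzero : ∀ l, P {ω | A l ω = 0} = ENNReal.ofReal (1 - p l) := by
    intro l
    have hcompl : {ω | A l ω = 0} = {ω | A l ω = 1}ᶜ := by
      ext ω
      simp only [Set.mem_setOf_eq, Set.mem_compl_iff]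
      rcases h01 l ω with h | h <;> simp [h]
    rw [hcompl, measure_compl
      (show MeasurableSet {ω | A l ω = 1} from (hmeas l) (measurableSet_singleton 1))
      (measure_ne_top _ _), hprob' l, measure_univ]
    rw [ENNReal.ofReal_sub _ (hp_nonneg l), ENNReal.ofReal_one]
  -- A = v iff b = bit
  have hA1 : ∀ l ω, A l ω = 1 ↔ b l ω = 1 := by
    intro l ω; rcases h01 l ω with h | h <;> simp [hb, h]
  have hA0 : ∀ l ω, A l ω = 0 ↔ b l ω = 0 := by
    intro l ω; rcases h01 l ω with h | h <;> simp [hb, h]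
  -- atoms as independent events
  have hatom : ∀ n, n < M → P {ω | k ω = n}
      = ENNReal.ofReal (r ^ n * ((1 - r) / (1 - r ^ M))) := by
    intro n hn
    have hbit : ∀ ω, k ω = n ↔ ∀ j ∈ Finset.range J,
        A ((j : ℤ) - N) ω = (if n.testBit j then (1 : ℝ) else 0) := by
      intro ω
      constructor
      · intro hkn j hj
        have hbj := aux_testBit_sum (fun i => b ((i : ℤ) - N) ω) (fun i => hb01 _ _) J j
          (Finset.mem_range.mp hj)
        beta_reduce at hbj
        rw [show ∑ i ∈ Finset.range J, 2 ^ i * b ((i : ℤ) - N) ω = n from hkn] at hbj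
        rw [hAb ((j : ℤ) - N) ω, hbj]
        by_cases htb : n.testBit j <;> simp [htb]
      · intro h
        have hbb : ∀ j ∈ Finset.range J, b ((j : ℤ) - N) ω
            = (if n.testBit j then 1 else 0) := by
          intro j hj
          have hthis := h j hj
          rw [hAb ((j : ℤ) - N) ω] at hthis
          by_cases htb : n.testBit j
          · rw [if_pos htb] at hthis ⊢; exact_mod_cast hthis
          · rw [if_neg htb] at hthis ⊢; exact_mod_cast hthis
        rw [hk]
        calc ∑ j ∈ Finset.range J, 2 ^ j * b ((j : ℤ) - N) ω
            = ∑ j ∈ Finset.range J, 2 ^ j * (if n.testBit j then 1 else 0) :=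
              Finset.sum_congr rfl (fun j hj => by rw [hbb j hj])
          _ = n := aux_sum_testBit J n (by rwa [← hM])
    have hinter : {ω | k ω = n}
        = ⋂ l ∈ Finset.Icc (-(N : ℤ)) (N : ℤ),
            (A l) ⁻¹' {if n.testBit ((l + N).toNat) then (1 : ℝ) else 0} := by
      ext ω
      simp only [Set.mem_setOf_eq, Set.mem_iInter, Set.mem_preimage, Set.mem_singleton_iff]
      rw [hbit ω]
      constructor
      · intro h l hl
        rw [Finset.mem_Icc] at hl
        have h1 := h (l + N).toNat (Finset.mem_range.mpr (by omega))
        have h2 : ((l + N).toNat : ℤ) - N = l := by omega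
        rw [h2] at h1
        exact h1
      · intro h j hj
        rw [Finset.mem_range] at hj
        have h1 := h ((j : ℤ) - N) (Finset.mem_Icc.mpr (by omega))
        have h2 : (((j : ℤ) - N) + N).toNat = j := by omega
        rw [h2] at h1
        exact h1
    rw [hinter]
    rw [hindep.meas_biInter
      (s := fun l => (A l) ⁻¹' {if n.testBit ((l + N).toNat) then (1 : ℝ) else 0})
      (fun l _ => ⟨{if n.testBit ((l + N).toNat) then (1 : ℝ) else 0},
        measurableSet_singleton _, rfl⟩)]
    have hfact : ∀ l : ℤ, P ((A l) ⁻¹' {if n.testBit ((l + N).toNat) then (1 : ℝ) else 0})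
        = ENNReal.ofReal (if n.testBit ((l + N).toNat) then p l else 1 - p l) := by
      intro l
      cases htb : n.testBit ((l + N).toNat) <;>
        simp only [htb, if_true, if_false, Bool.false_eq_true]
      · exact hPzero l
      · exact hprob' l
    rw [Finset.prod_congr rfl (fun l _ => hfact l)]
    rw [← ENNReal.ofReal_prod_of_nonneg (fun l _ => by
      cases n.testBit ((l + N).toNat) <;> simp only [if_true, if_false, Bool.false_eq_true]
      · exact sub_nonneg.mpr (hp_le_one l)
      · exact hp_nonneg l)]
    congr 1
    -- the real computation
    rw [hIcc, Finset.prod_map]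
    simp only [he, Function.Embedding.coeFn_mk]
    have hidx : ∀ j : ℕ, (((j : ℤ) - N) + N).toNat = j := fun j => by omega
    have hcj : ∀ j : ℕ, lam * (2 : ℝ) ^ ((j : ℤ) - N) = c * 2 ^ j := by
      intro j
      rw [zpow_sub₀ h2ne, hc]
      rw [zpow_natCast]
      field_simp
      rw [← zpow_add₀ h2ne, add_neg_cancel, zpow_zero]
    have hrj : ∀ j : ℕ, Real.exp (-(c * 2 ^ j)) = r ^ (2 ^ j : ℕ) := by
      intro j
      rw [hr, ← Real.exp_nat_mul]
      congr 1
      push_cast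
      ring
    have hkey : ∀ y : ℝ, 1 / (1 + Real.exp y) = Real.exp (-y) / (1 + Real.exp (-y)) := by
      intro y
      rw [Real.exp_neg]
      have h1 := Real.exp_pos y
      field_simp
      ring
    have hkey2 : ∀ y : ℝ, 1 - 1 / (1 + Real.exp y) = 1 / (1 + Real.exp (-y)) := by
      intro y
      rw [Real.exp_neg]
      have h1 := Real.exp_pos y
      field_simp
      ring
    have hfac2 : ∀ j ∈ Finset.range J,
        (if n.testBit (((j : ℤ) - N + N).toNat) then p ((j : ℤ) - N) else 1 - p ((j : ℤ) - N))
        = (r ^ (2 ^ j)) ^ (if n.testBit j then 1 else 0) / (1 + r ^ (2 ^ j)) := by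
      intro j _
      rw [hidx j, hp]
      simp only
      rw [hcj j]
      cases htb : n.testBit j <;> simp only [if_true, if_false, Bool.false_eq_true, pow_zero,
        pow_one]
      · rw [hkey2 (c * 2 ^ j), hrj j]
      · rw [hkey (c * 2 ^ j), hrj j]
    rw [Finset.prod_congr rfl hfac2]
    rw [Finset.prod_div_distrib]
    have hnum : ∏ j ∈ Finset.range J, (r ^ 2 ^ j) ^ (if n.testBit j then 1 else 0)
        = r ^ n := by
      have : ∀ j ∈ Finset.range J, (r ^ 2 ^ j) ^ (if n.testBit j then 1 else 0)
          = r ^ (2 ^ j * (if n.testBit j then 1 else 0)) := fun j _ => by rw [pow_mul]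
      rw [Finset.prod_congr rfl this, Finset.prod_pow_eq_pow_sum,
        aux_sum_testBit J n (by rwa [← hM])]
    have hden : ∏ j ∈ Finset.range J, (1 + r ^ 2 ^ j) = (1 - r ^ M) / (1 - r) := by
      rw [aux_prod_geom r hrne1 J, hM]
    rw [hnum, hden]
    have hrM : r ^ M < 1 := pow_lt_one₀ hrpos.le hrlt1 (by positivity)
    have h1 : (1 : ℝ) - r ≠ 0 := sub_ne_zero.mpr (Ne.symm hrne1)
    have h2 : (1 : ℝ) - r ^ M ≠ 0 := sub_ne_zero.mpr (by linarith)
    field_simp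
  -- sum the atoms
  rw [Finset.sum_congr rfl (fun n hn => hatom n (Finset.mem_Ico.mp hn).2)]
  rw [← ENNReal.ofReal_sum_of_nonneg (fun n _ => by
    have h1 : (0:ℝ) ≤ r ^ n := by positivity
    have hrM : r ^ M < 1 := pow_lt_one₀ hrpos.le hrlt1 (by positivity)
    have h2 : (0:ℝ) ≤ (1 - r) / (1 - r ^ M) := by
      apply div_nonneg <;> linarith
    positivity)]
  rw [← Finset.sum_mul]
  have hrM : r ^ M < 1 := pow_lt_one₀ hrpos.le hrlt1 (by positivity)
  have h1 : (1 : ℝ) - r ≠ 0 := sub_ne_zero.mpr (Ne.symm hrne1)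
  have h2 : (1 : ℝ) - r ^ M ≠ 0 := sub_ne_zero.mpr (by linarith)
  rcases le_or_gt m M with hmM | hmM
  · rw [geom_sum_Ico hrne1 hmM]
    congr 1
    have hgen : ∀ a bb : ℝ, (1:ℝ) - bb ≠ 0 →
        (bb - a) / (r - 1) * ((1 - r) / (1 - bb)) = (a - bb) / (1 - bb) := by
      intro a bb hb0
      have hr0 : r - 1 ≠ 0 := fun h => hrne1 (by linarith)
      field_simp
      ring
    exact hgen (r ^ m) (r ^ M) h2
  · rw [Finset.Ico_eq_empty (by omega), Finset.sum_empty, zero_mul, ENNReal.ofReal_zero]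
    symm
    rw [ENNReal.ofReal_eq_zero]
    have hle : r ^ m ≤ r ^ M := pow_le_pow_of_le_one hrpos.le hrlt1.le (by omega)
    apply div_nonpos_of_nonpos_of_nonneg <;> linarith

end Core

open Filter Topology in
lemma aux_limit (lam : ℝ) (hlam : 0 < lam) (x : ℝ) (hx : 0 ≤ x) :
    Tendsto (fun N : ℕ =>
      ENNReal.ofReal
        ((Real.exp (-(lam * (2 : ℝ) ^ (-(N : ℤ)))) ^ ((⌊(2 : ℝ) ^ (N : ℤ) * x⌋).toNat + 1)
            - Real.exp (-(lam * (2 : ℝ) ^ (-(N : ℤ)))) ^ (2 ^ (2 * N + 1)))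
          / (1 - Real.exp (-(lam * (2 : ℝ) ^ (-(N : ℤ)))) ^ (2 ^ (2 * N + 1)))))
      atTop (𝓝 (ENNReal.ofReal (Real.exp (-(lam * x))))) := by
  have h2ne : (2 : ℝ) ≠ 0 := by norm_num
  set m : ℕ → ℕ := fun N => (⌊(2 : ℝ) ^ (N : ℤ) * x⌋).toNat + 1 with hm
  have hApow : ∀ N : ℕ, Real.exp (-(lam * (2 : ℝ) ^ (-(N : ℤ)))) ^ (m N)
      = Real.exp (-(lam * ((2 : ℝ) ^ (-(N : ℤ)) * (m N : ℝ)))) := by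
    intro N
    rw [← Real.exp_nat_mul]
    congr 1
    ring
  have hgrid : Tendsto (fun N : ℕ => (2 : ℝ) ^ (-(N : ℤ)) * (m N : ℝ)) atTop (𝓝 x) := by
    have hup : Tendsto (fun N : ℕ => x + (1 / 2 : ℝ) ^ N) atTop (𝓝 x) := by
      have := tendsto_pow_atTop_nhds_zero_of_lt_one (by norm_num : (0:ℝ) ≤ 1/2)
        (by norm_num : (1/2 : ℝ) < 1)
      simpa using tendsto_const_nhds.add this
    have key : ∀ N : ℕ, x ≤ (2:ℝ)^(-(N:ℤ)) * (m N : ℝ)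
        ∧ (2:ℝ)^(-(N:ℤ)) * (m N : ℝ) ≤ x + (1/2:ℝ)^N := by
      intro N
      have hpos : (0:ℝ) < (2 : ℝ) ^ (N : ℤ) := zpow_pos (by norm_num) _
      have hinvpos : (0:ℝ) < (2 : ℝ) ^ (-(N : ℤ)) := zpow_pos (by norm_num) _
      have hcancel : (2 : ℝ) ^ (-(N : ℤ)) * (2 : ℝ) ^ (N : ℤ) = 1 := by
        rw [← zpow_add₀ h2ne]; simp
      have hfl0 : 0 ≤ ⌊(2 : ℝ) ^ (N : ℤ) * x⌋ := Int.floor_nonneg.mpr (by positivity)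
      have hcast : ((⌊(2 : ℝ) ^ (N : ℤ) * x⌋.toNat : ℕ) : ℝ)
          = ((⌊(2 : ℝ) ^ (N : ℤ) * x⌋ : ℤ) : ℝ) := by
        exact_mod_cast Int.toNat_of_nonneg hfl0
      have hmcast : (m N : ℝ) = ((⌊(2 : ℝ) ^ (N : ℤ) * x⌋ : ℤ) : ℝ) + 1 := by
        rw [hm]
        push_cast [← hcast]
        norm_num
      have hlow : (2 : ℝ) ^ (N : ℤ) * x < (m N : ℝ) := by
        rw [hmcast]; exact Int.lt_floor_add_one _
      have hhigh : (m N : ℝ) ≤ (2 : ℝ) ^ (N : ℤ) * x + 1 := by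
        rw [hmcast]
        have := Int.floor_le ((2 : ℝ) ^ (N : ℤ) * x)
        linarith
      have hhalf : (1/2:ℝ)^N = (2 : ℝ) ^ (-(N : ℤ)) := by
        rw [zpow_neg, zpow_natCast, one_div, inv_pow]
      constructor
      · nlinarith
      · rw [hhalf]; nlinarith
    exact tendsto_of_tendsto_of_tendsto_of_le_of_le tendsto_const_nhds hup
      (fun N => (key N).1) (fun N => (key N).2)
  have h1 : Tendsto (fun N : ℕ => Real.exp (-(lam * (2 : ℝ) ^ (-(N : ℤ)))) ^ (m N)) atTop
      (𝓝 (Real.exp (-(lam * x)))) := by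
    have ht : Tendsto (fun N : ℕ => -(lam * ((2 : ℝ) ^ (-(N : ℤ)) * (m N : ℝ)))) atTop
        (𝓝 (-(lam * x))) := (hgrid.const_mul lam).neg
    have h2 := (Real.continuous_exp.tendsto _).comp ht
    exact Tendsto.congr (fun N => (hApow N).symm) h2
  have hBpow : ∀ N : ℕ, Real.exp (-(lam * (2 : ℝ) ^ (-(N : ℤ)))) ^ (2 ^ (2 * N + 1))
      = Real.exp (-(lam * (2 : ℝ) ^ ((N : ℤ) + 1))) := by
    intro N
    rw [← Real.exp_nat_mul]
    congr 1
    have hc : ((2 ^ (2 * N + 1) : ℕ) : ℝ) = (2 : ℝ) ^ ((2 * N + 1 : ℕ) : ℤ) := by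
      rw [zpow_natCast]
      push_cast
      ring
    rw [hc]
    have h2 : (2 : ℝ) ^ ((2 * N + 1 : ℕ) : ℤ) * (2 : ℝ) ^ (-(N : ℤ))
        = (2 : ℝ) ^ ((N : ℤ) + 1) := by
      rw [← zpow_add₀ h2ne]
      congr 1
      push_cast
      ring
    calc ((2:ℝ) ^ ((2 * N + 1 : ℕ) : ℤ)) * -(lam * (2 : ℝ) ^ (-(N : ℤ)))
        = -(lam * ((2 : ℝ) ^ ((2 * N + 1 : ℕ) : ℤ) * (2 : ℝ) ^ (-(N : ℤ)))) := by ring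
      _ = -(lam * (2 : ℝ) ^ ((N : ℤ) + 1)) := by rw [h2]
  have h2 : Tendsto (fun N : ℕ => Real.exp (-(lam * (2 : ℝ) ^ (-(N : ℤ)))) ^ (2 ^ (2 * N + 1)))
      atTop (𝓝 0) := by
    apply squeeze_zero (fun N => by positivity)
      (g := fun N : ℕ => Real.exp (-lam) ^ (N + 1))
    · intro N
      rw [hBpow N, ← Real.exp_nat_mul]
      apply Real.exp_le_exp.mpr
      have hN2 : ((N : ℝ) + 1) ≤ (2 : ℝ) ^ ((N : ℤ) + 1) := by
        have hnat : N + 1 ≤ 2 ^ (N + 1) := (Nat.lt_two_pow_self (n := N + 1)).le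
        calc ((N:ℝ) + 1) = ((N + 1 : ℕ) : ℝ) := by push_cast; ring
          _ ≤ ((2 ^ (N + 1) : ℕ) : ℝ) := by exact_mod_cast hnat
          _ = (2:ℝ) ^ ((N:ℤ) + 1) := by
              rw [show ((N:ℤ) + 1) = ((N + 1 : ℕ) : ℤ) from by push_cast; ring, zpow_natCast]
              push_cast
              ring
      push_cast
      nlinarith
    · have hlt : Real.exp (-lam) < 1 := by
        rw [Real.exp_lt_one_iff]; linarith
      have hg := tendsto_pow_atTop_nhds_zero_of_lt_one (Real.exp_nonneg _) hlt
      exact hg.comp (tendsto_add_atTop_nat 1)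
  have hden : Tendsto (fun N : ℕ =>
      1 - Real.exp (-(lam * (2 : ℝ) ^ (-(N : ℤ)))) ^ (2 ^ (2 * N + 1))) atTop (𝓝 1) := by
    simpa using tendsto_const_nhds.sub h2
  have hreal := (h1.sub h2).div hden (by norm_num)
  simp only [sub_zero, div_one] at hreal
  exact (ENNReal.continuous_ofReal.tendsto _).comp hreal


/-- **Lemma 3 of the paper, "if" direction.** If `(A l)_{l : ℤ}` are mutually independent
`{0,1}`-valued random variables with `Pr{A l = 1} = 1 / (1 + exp (λ 2^l))`, then the series
`∑_{l : ℤ} 2^l * A l` converges almost surely, and the law of its sum is the exponential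
distribution with rate `λ`. -/
theorem binary_expansion_of_exponential_if
    {Ω : Type*} [MeasurableSpace Ω] (P : Measure Ω) [IsProbabilityMeasure P]
    (lam : ℝ) (hlam : 0 < lam) (A : ℤ → Ω → ℝ)
    (hmeas : ∀ l : ℤ, Measurable (A l))
    (h01 : ∀ (l : ℤ) (ω : Ω), A l ω = 0 ∨ A l ω = 1)
    (hindep : iIndepFun A P)
    (hprob : ∀ l : ℤ,
      P {ω | A l ω = 1} = ENNReal.ofReal (1 / (1 + Real.exp (lam * 2 ^ l)))) :
    (∀ᵐ ω ∂P, Summable fun l : ℤ => (2 : ℝ) ^ l * A l ω) ∧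
      P.map (fun ω => ∑' l : ℤ, (2 : ℝ) ^ l * A l ω) = expMeasure lam := by
  have hnonneg : ∀ (l : ℤ) (ω : Ω), 0 ≤ (2 : ℝ) ^ l * A l ω := by
    intro l ω
    rcases h01 l ω with h | h <;> rw [h] <;> positivity
  have hterm_meas : ∀ l : ℤ, Measurable fun ω => ENNReal.ofReal ((2 : ℝ) ^ l * A l ω) :=
    fun l => ((hmeas l).const_mul ((2 : ℝ) ^ l)).ennreal_ofReal
  have hexp_pos : ∀ y : ℝ, (0 : ℝ) < 1 + Real.exp y := fun y => by positivity
  -- summable bound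
  set B : ℤ → ℝ := fun l => (2 : ℝ) ^ l * min 1 (Real.exp (-(lam * 2 ^ l))) with hB
  have hBnonneg : ∀ l, 0 ≤ B l := fun l =>
    mul_nonneg (by positivity) (le_min zero_le_one (Real.exp_nonneg _))
  have hBsummable : Summable B := by
    apply Summable.of_nat_of_neg
    · have hg : Summable (fun k : ℕ => (k : ℝ) ^ 1 * Real.exp (-lam) ^ k) :=
        summable_pow_mul_geometric_of_norm_lt_one 1
          (by rw [Real.norm_eq_abs, abs_of_nonneg (Real.exp_nonneg _), Real.exp_lt_one_iff]
              linarith)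
      have hcomp : Summable ((fun k : ℕ => (k : ℝ) ^ 1 * Real.exp (-lam) ^ k)
          ∘ (fun n : ℕ => 2 ^ n)) :=
        hg.comp_injective (Nat.pow_right_injective (le_refl 2))
      apply Summable.of_nonneg_of_le (fun n => hBnonneg _) _ hcomp
      intro n
      have h1 : B (n : ℤ) ≤ (2 : ℝ) ^ (n : ℤ) * Real.exp (-(lam * 2 ^ (n : ℤ))) :=
        mul_le_mul_of_nonneg_left (min_le_right _ _) (by positivity)
      refine h1.trans (le_of_eq ?_)
      simp only [Function.comp_apply, pow_one]
      have hc1 : ((2 ^ n : ℕ) : ℝ) = (2 : ℝ) ^ (n : ℤ) := by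
        rw [zpow_natCast]; push_cast; ring
      rw [hc1]
      congr 1
      rw [← Real.exp_nat_mul]
      congr 1
      rw [hc1]
      ring
    · have hgeo : Summable (fun n : ℕ => ((2 : ℝ)⁻¹) ^ n) :=
        summable_geometric_of_lt_one (by norm_num) (by norm_num)
      apply Summable.of_nonneg_of_le (fun n => hBnonneg _) _ hgeo
      intro n
      have h1 : B (-(n : ℤ)) ≤ (2 : ℝ) ^ (-(n : ℤ)) * 1 :=
        mul_le_mul_of_nonneg_left (min_le_left _ _) (by positivity)
      refine h1.trans (le_of_eq ?_)
      rw [mul_one, zpow_neg, zpow_natCast, inv_pow]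
  -- expected value of each term
  have hPA : ∀ l : ℤ, ∫⁻ ω, ENNReal.ofReal ((2 : ℝ) ^ l * A l ω) ∂P
      = ENNReal.ofReal ((2 : ℝ) ^ l) * P {ω | A l ω = 1} := by
    intro l
    have hEmeas : MeasurableSet {ω | A l ω = 1} := (hmeas l) (measurableSet_singleton 1)
    have hrw : (fun ω => ENNReal.ofReal ((2 : ℝ) ^ l * A l ω))
        = fun ω => ENNReal.ofReal ((2 : ℝ) ^ l)
            * ({ω | A l ω = 1}.indicator (fun _ => (1 : ℝ≥0∞)) ω) := by
      funext ω
      rcases h01 l ω with h | h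
      · rw [h, Set.indicator_of_notMem (by simp [h])]
        simp
      · rw [h, Set.indicator_of_mem (by simp [h])]
        simp
    rw [hrw, lintegral_const_mul _ (measurable_const.indicator hEmeas)]
    congr 1
    rw [lintegral_indicator hEmeas]
    simp
  -- integrability
  have hfin : ∫⁻ ω, ∑' l : ℤ, ENNReal.ofReal ((2 : ℝ) ^ l * A l ω) ∂P ≠ ⊤ := by
    rw [lintegral_tsum (fun l => (hterm_meas l).aemeasurable)]
    have hple : ∀ l : ℤ, (2 : ℝ) ^ l * (1 / (1 + Real.exp (lam * 2 ^ l))) ≤ B l := by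
      intro l
      apply mul_le_mul_of_nonneg_left _ (by positivity)
      apply le_min
      · rw [div_le_one (hexp_pos _)]
        have := Real.exp_pos (lam * 2 ^ l)
        linarith
      · have h1 : 1 / (1 + Real.exp (lam * 2 ^ l)) ≤ 1 / Real.exp (lam * 2 ^ l) := by
          apply one_div_le_one_div_of_le (Real.exp_pos _)
          linarith
        rwa [Real.exp_neg, ← one_div]
    have hle : ∀ l : ℤ, ∫⁻ ω, ENNReal.ofReal ((2 : ℝ) ^ l * A l ω) ∂P
        ≤ ENNReal.ofReal (B l) := by
      intro l
      rw [hPA l, hprob l, ← ENNReal.ofReal_mul (by positivity)]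
      exact ENNReal.ofReal_le_ofReal (hple l)
    refine ne_top_of_le_ne_top ?_ (ENNReal.tsum_le_tsum hle)
    rw [← ENNReal.ofReal_tsum_of_nonneg hBnonneg hBsummable]
    exact ENNReal.ofReal_ne_top
  -- a.s. summability
  have hsumae : ∀ᵐ ω ∂P, Summable fun l : ℤ => (2 : ℝ) ^ l * A l ω := by
    filter_upwards [ae_lt_top (Measurable.ennreal_tsum hterm_meas) hfin] with ω hω
    have h2 : (∑' l : ℤ, ((Real.toNNReal ((2 : ℝ) ^ l * A l ω)) : ℝ≥0∞)) ≠ ⊤ := hω.ne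
    have h3 := ENNReal.tsum_coe_ne_top_iff_summable.mp h2
    have h4 := NNReal.summable_coe.mpr h3
    exact h4.congr (fun l => Real.coe_toNNReal _ (hnonneg l ω))
  refine ⟨hsumae, ?_⟩
  -- notation
  set X : Ω → ℝ := fun ω => ∑' l : ℤ, (2 : ℝ) ^ l * A l ω with hX
  set Y : ℕ → Ω → ℝ := fun N ω => ∑ l ∈ Finset.Icc (-(N : ℤ)) (N : ℤ), (2 : ℝ) ^ l * A l ω
    with hY
  have hYmeas : ∀ N, Measurable (Y N) :=
    fun N => Finset.measurable_sum _ (fun l _ => (hmeas l).const_mul _)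
  have hIccmono : Monotone (fun N : ℕ => Finset.Icc (-(N : ℤ)) (N : ℤ)) := by
    intro a b hab
    apply Finset.Icc_subset_Icc <;> omega
  have hIcctop : Tendsto (fun N : ℕ => Finset.Icc (-(N : ℤ)) (N : ℤ)) atTop atTop :=
    tendsto_atTop_finset_of_monotone hIccmono
      (fun l => ⟨l.natAbs, by simp only [Finset.mem_Icc]; omega⟩)
  have hYtend : ∀ ω, (Summable fun l : ℤ => (2 : ℝ) ^ l * A l ω) →
      Tendsto (fun N => Y N ω) atTop (𝓝 (X ω)) := by
    intro ω hs
    exact hs.hasSum.comp hIcctop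
  have hXae : AEMeasurable X P :=
    aemeasurable_of_tendsto_metrizable_ae atTop (fun N => (hYmeas N).aemeasurable)
      (hsumae.mono fun ω hs => hYtend ω hs)
  haveI := isProbabilityMeasure_expMeasure hlam
  haveI : IsProbabilityMeasure (P.map X) := Measure.isProbabilityMeasure_map hXae
  apply MeasureTheory.Measure.ext_of_Iic
  intro a
  rw [Measure.map_apply_of_aemeasurable hXae measurableSet_Iic]
  have hRHS : expMeasure lam (Set.Iic a)
      = ENNReal.ofReal (if 0 ≤ a then 1 - Real.exp (-(lam * a)) else 0) := by
    have h1 : expMeasure lam (Set.Iic a) = ∫⁻ y in Set.Iic a, exponentialPDF lam y :=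
      withDensity_apply _ measurableSet_Iic
    rw [h1, lintegral_exponentialPDF_eq_antiDeriv hlam a]
  rw [hRHS]
  by_cases ha : 0 ≤ a
  swap
  · rw [if_neg ha]
    have hempty : X ⁻¹' (Set.Iic a) = ∅ := by
      ext ω
      simp only [Set.mem_preimage, Set.mem_Iic, Set.mem_empty_iff_false, iff_false, not_le]
      have : 0 ≤ X ω := tsum_nonneg (fun l => hnonneg l ω)
      linarith
    rw [hempty, measure_empty, ENNReal.ofReal_zero]
  · rw [if_pos ha]
    have hcongrG : ∀ S : Set Ω,
        P (S ∩ {ω | Summable fun l : ℤ => (2 : ℝ) ^ l * A l ω}) = P S := by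
      intro S
      refine measure_congr (Filter.eventuallyEq_set.mpr ?_)
      filter_upwards [hsumae] with ω hω
      simp only [Set.mem_inter_iff, Set.mem_setOf_eq]
      exact ⟨fun h => h.1, fun h => ⟨h, hω⟩⟩
    have htail : P {ω | a < X ω} = ENNReal.ofReal (Real.exp (-(lam * a))) := by
      set G : Set Ω := {ω | Summable fun l : ℤ => (2 : ℝ) ^ l * A l ω} with hG
      have hmono : Monotone (fun N : ℕ => {ω | a < Y N ω} ∩ G) := by
        intro N1 N2 h
        apply Set.inter_subset_inter_left
        intro ω hω
        simp only [Set.mem_setOf_eq] at hω ⊢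
        refine lt_of_lt_of_le hω ?_
        exact Finset.sum_le_sum_of_subset_of_nonneg (hIccmono h)
          (fun l _ _ => hnonneg l ω)
      have hU : {ω | a < X ω} ∩ G = ⋃ N : ℕ, ({ω | a < Y N ω} ∩ G) := by
        ext ω
        simp only [Set.mem_inter_iff, Set.mem_setOf_eq, Set.mem_iUnion, hG]
        constructor
        · rintro ⟨hlt, hs⟩
          obtain ⟨N, hN⟩ := ((hYtend ω hs).eventually (lt_mem_nhds hlt)).exists
          exact ⟨N, hN, hs⟩
        · rintro ⟨N, hN, hs⟩
          refine ⟨lt_of_lt_of_le hN ?_, hs⟩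
          exact Summable.sum_le_tsum _ (fun l _ => hnonneg l ω) hs
      have hlim := tendsto_measure_iUnion_atTop (μ := P) hmono
      rw [← hU] at hlim
      have hform : ∀ N : ℕ, P ({ω | a < Y N ω} ∩ G)
          = ENNReal.ofReal
            ((Real.exp (-(lam * (2 : ℝ) ^ (-(N : ℤ)))) ^ ((⌊(2 : ℝ) ^ (N : ℤ) * a⌋).toNat + 1)
                - Real.exp (-(lam * (2 : ℝ) ^ (-(N : ℤ)))) ^ (2 ^ (2 * N + 1)))
              / (1 - Real.exp (-(lam * (2 : ℝ) ^ (-(N : ℤ)))) ^ (2 ^ (2 * N + 1)))) := by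
        intro N
        rw [hcongrG]
        exact aux_core P lam hlam A hmeas h01 hindep hprob a ha N
      have hlim2 : Tendsto (fun N : ℕ => P ({ω | a < Y N ω} ∩ G)) atTop
          (𝓝 (ENNReal.ofReal (Real.exp (-(lam * a))))) :=
        (aux_limit lam hlam a ha).congr (fun N => (hform N).symm)
      have hPeq := tendsto_nhds_unique hlim hlim2
      rw [← hcongrG {ω | a < X ω}]
      exact hPeq
    have hpre : X ⁻¹' Set.Iic a = {ω | a < X ω}ᶜ := by
      ext ω
      simp [Set.mem_preimage, not_lt]
    rw [hpre, measure_compl₀ ?_ (measure_ne_top _ _), measure_univ, htail]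
    · rw [ENNReal.ofReal_sub _ (Real.exp_nonneg _), ENNReal.ofReal_one]
    · exact (hXae.nullMeasurable measurableSet_Ioi :
        NullMeasurableSet (X ⁻¹' Set.Ioi a) P)
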